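/- arXiv:math/0612798 — 3 statements merged into one kernel-verified Lean document; each statement's English description precedes it below -/
import Mathlib

section
/- Let g be a complex simple Lie algebra, identify g ≅ g* via an invariant form, and let χ ∈ g be a regular nilpotent element contained in an sl_2-triple {e = χ, 2ρ̌, f}. Let P̄_1,…,P̄_ℓ be homogeneous generators of (Fun g*)^g of degrees d_1+1,…,d_ℓ+1. For each i, expand the differential of x ↦ P̄_i(x + uχ) at x = ρ̌ as d P̄_i(x+uχ)|_{x=ρ̌} = Σ_{k=0}^{d_i} C_{i,k} u^k with C_{i,k} ∈ g. Then the elements C_{i,k}, for i = 1,…,ℓ and 0 ≤ k ≤ d_i, are linearly independent and span the Borel subalgebra b = ⊕_{j≥0} g_j (the nonnegative eigenspaces of ad ρ̌). -/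
open Finset

section aux

variable {g : Type*} [LieRing g] [LieAlgebra ℂ g] (G : ℤ → Submodule ℂ g)
variable (hinternal : DirectSum.IsInternal fun j : ℤ => G j)

/-- Projection onto the degree-`m` component of the internal direct sum. -/
noncomputable def projL (m : ℤ) : g →ₗ[ℂ] g :=
  (G m).subtype ∘ₗ (DirectSum.component ℂ ℤ (fun j : ℤ => G j) m) ∘ₗ
    (LinearEquiv.ofBijective (DirectSum.coeLinearMap fun j : ℤ => G j)
      hinternal).symm.toLinearMap

lemma projL_mem (m : ℤ) (x : g) : projL G hinternal m x ∈ G m :=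
  SetLike.coe_mem _

lemma projL_of_mem {j : ℤ} {x : g} (hx : x ∈ G j) : projL G hinternal j x = x := by
  have h := hinternal.ofBijective_coeLinearMap_of_mem hx
  simp only [projL, LinearMap.coe_comp, Function.comp_apply, LinearEquiv.coe_coe]
  erw [h]
  rfl

lemma projL_of_mem_ne {j m : ℤ} (hmj : m ≠ j) {x : g} (hx : x ∈ G j) :
    projL G hinternal m x = 0 := by
  have h := hinternal.ofBijective_coeLinearMap_of_mem_ne (Ne.symm hmj) hx
  simp only [projL, LinearMap.coe_comp, Function.comp_apply, LinearEquiv.coe_coe]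
  erw [h]
  rfl

lemma projL_sum (x : g) : ∃ s : Finset ℤ, x = ∑ m ∈ s, projL G hinternal m x := by
  classical
  set E := LinearEquiv.ofBijective (DirectSum.coeLinearMap fun j : ℤ => G j) hinternal with hE
  refine ⟨(E.symm x).support, ?_⟩
  have key : ∑ m ∈ (E.symm x).support, projL G hinternal m x
      = E.toLinearMap (∑ m ∈ (E.symm x).support,
          DirectSum.of (fun j : ℤ => G j) m ((E.symm x) m)) := by
    rw [map_sum]
    refine Finset.sum_congr rfl fun m _ => ?_
    show _ = E (DirectSum.of _ m ((E.symm x) m))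
    rw [hE]
    erw [LinearEquiv.ofBijective_apply, DirectSum.coeLinearMap_of]
    rfl
  have key2 : E.toLinearMap (∑ m ∈ (E.symm x).support,
      DirectSum.of (fun j : ℤ => G j) m ((E.symm x) m)) = x := by
    rw [DirectSum.sum_support_of (E.symm x)]
    exact E.apply_symm_apply x
  rw [key, key2]

lemma mem_of_projL (P : ℤ → Prop) (V : Submodule ℂ g) (hV : ∀ m, P m → G m ≤ V)
    (x : g) (hx : ∀ m, ¬ P m → projL G hinternal m x = 0) : x ∈ V := by
  classical
  obtain ⟨s, hs⟩ := projL_sum G hinternal x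
  rw [hs]
  refine Submodule.sum_mem _ fun m _ => ?_
  by_cases h : P m
  · exact hV m h (projL_mem G hinternal m x)
  · rw [hx m h]; exact V.zero_mem

lemma projL_lie_rho (ρ : g) (hgrade : ∀ j : ℤ, ∀ x ∈ G j, ⁅ρ, x⁆ = (j : ℂ) • x)
    (m : ℤ) (x : g) :
    projL G hinternal m ⁅ρ, x⁆ = (m : ℂ) • projL G hinternal m x := by
  obtain ⟨s, hs⟩ := projL_sum G hinternal x
  have h1 : ⁅ρ, x⁆ = ∑ m' ∈ s, ((m' : ℂ) • projL G hinternal m' x) := by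
    conv_lhs => rw [hs, ← LieAlgebra.ad_apply ℂ, map_sum]
    simp only [LieAlgebra.ad_apply]
    exact Finset.sum_congr rfl fun m' _ =>
      hgrade m' _ (projL_mem G hinternal m' x)
  rw [h1, map_sum]
  conv_rhs => rw [hs, map_sum, Finset.smul_sum]
  refine Finset.sum_congr rfl fun m' _ => ?_
  rw [map_smul]
  by_cases h : m' = m
  · subst h; rfl
  · rw [projL_of_mem_ne G hinternal (Ne.symm h) (projL_mem G hinternal m' x),
      smul_zero, smul_zero]

include hinternal in
lemma mem_of_eigen (ρ : g) (hgrade : ∀ j : ℤ, ∀ x ∈ G j, ⁅ρ, x⁆ = (j : ℂ) • x)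
    (j : ℤ) (x : g) (hx : ⁅ρ, x⁆ = (j : ℂ) • x) : x ∈ G j := by
  refine mem_of_projL G hinternal (· = j) (G j) ?_ x fun m hm => ?_
  · rintro m rfl; exact le_rfl
  · have h1 := projL_lie_rho G hinternal ρ hgrade m x
    rw [hx, map_smul] at h1
    have h2 : ((m : ℂ) - (j : ℂ)) • projL G hinternal m x = 0 := by
      rw [sub_smul, ← h1, sub_self]
    rcases smul_eq_zero.mp h2 with h | h
    · exact absurd (Int.cast_injective (sub_eq_zero.mp h)) hm
    · exact h

include hinternal in
lemma lie_e_mem (ρ e : g) (hgrade : ∀ j : ℤ, ∀ x ∈ G j, ⁅ρ, x⁆ = (j : ℂ) • x)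
    (he : e ∈ G 1) {m : ℤ} {x : g} (hx : x ∈ G m) : ⁅e, x⁆ ∈ G (m + 1) := by
  refine mem_of_eigen G hinternal ρ hgrade (m + 1) _ ?_
  have h2 : ⁅ρ, e⁆ = e := by
    have := hgrade 1 e he; rwa [Int.cast_one, one_smul] at this
  have h1 : ⁅ρ, ⁅e, x⁆⁆ = ⁅⁅ρ, e⁆, x⁆ + ⁅e, ⁅ρ, x⁆⁆ := leibniz_lie ρ e x
  rw [h2, hgrade m x hx, lie_smul] at h1
  rw [h1]
  push_cast
  rw [add_smul, one_smul, add_comm]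

end aux

/-- The "purified" coefficients, defined by the clean recursion
`p 0 = c₀`, `p (k+1) = (-(k+1))⁻¹ • ⁅e, p k⁆`. -/
noncomputable def pAux {g : Type*} [LieRing g] [LieAlgebra ℂ g] (e c0 : g) : ℕ → g
  | 0 => c0
  | (k + 1) => (-((k : ℂ) + 1))⁻¹ • ⁅e, pAux e c0 k⁆

/-- let `g = ⊕_{j=-h}^{h} g_j` be the principal gradation of a
simple Lie algebra by `ad ρ̌`, let `e = χ ∈ g_1` be regular nilpotent, and let
`C_{i,k}` (`i = 1,…,ℓ`, `0 ≤ k ≤ d_i`) be the coefficients of the expansion of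
`d P̄_i(x + uχ)|_{x = ρ̌}` in powers of `u`.  These coefficients satisfy the
recursions `[ρ̌, C_{i,0}] = 0`, `[ρ̌, C_{i,k}] + [e, C_{i,k-1}] = 0`,
`[e, C_{i,d_i}] = 0`; together with the facts that `ad e : g_j → g_{j+1}` is
surjective for `j ≥ 0`, that `ker(ad ρ̌) = g_0`, and that the `C_{i,0}` span
`g_0` (Kostant), the `C_{i,k}` are linearly independent and span the Borel
subalgebra `b = ⊕_{j ≥ 0} g_j`. -/
theorem shift_coefficients_independent_and_span_borel
    {g : Type*} [LieRing g] [LieAlgebra ℂ g] [FiniteDimensional ℂ g]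
    (G : ℤ → Submodule ℂ g)
    (hinternal : DirectSum.IsInternal fun j : ℤ => G j)
    (ρ e : g) (hρ : ρ ∈ G 0) (he : e ∈ G 1)
    (hgrade : ∀ j : ℤ, ∀ x ∈ G j, ⁅ρ, x⁆ = (j : ℂ) • x)
    {ℓ : ℕ} (d : Fin ℓ → ℕ)
    (C : Fin ℓ → ℕ → g)
    (h0 : ∀ i, ⁅ρ, C i 0⁆ = 0)
    (hrec : ∀ (i : Fin ℓ) (k : ℕ), 0 < k → k ≤ d i →
      ⁅ρ, C i k⁆ + ⁅e, C i (k - 1)⁆ = 0)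
    (hlast : ∀ i, ⁅e, C i (d i)⁆ = 0)
    (hsurj : ∀ j : ℕ, ∀ y ∈ G ((j : ℤ) + 1), ∃ x ∈ G (j : ℤ), ⁅e, x⁆ = y)
    (hker : ∀ x : g, ⁅ρ, x⁆ = 0 → x ∈ G 0)
    (hspan0 : Submodule.span ℂ (Set.range fun i : Fin ℓ => C i 0) = G 0)
    (hdimb : Module.finrank ℂ (⨆ j : ℕ, G (j : ℤ) : Submodule ℂ g)
      = ∑ i : Fin ℓ, (d i + 1)) :
    LinearIndependent ℂ (fun q : Σ i : Fin ℓ, Fin (d i + 1) => C q.1 (q.2 : ℕ)) ∧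
    Submodule.span ℂ
        (Set.range fun q : Σ i : Fin ℓ, Fin (d i + 1) => C q.1 (q.2 : ℕ))
      = ⨆ j : ℕ, G (j : ℤ) := by
  classical
  set S : Set g := Set.range fun q : Σ i : Fin ℓ, Fin (d i + 1) => C q.1 (q.2 : ℕ) with hS
  -- the purified family
  set p : Fin ℓ → ℕ → g := fun i => pAux e (C i 0) with hp
  have hp0 : ∀ i, p i 0 = C i 0 := fun i => rfl
  have hpsucc : ∀ i k, p i (k + 1) = (-((k : ℂ) + 1))⁻¹ • ⁅e, p i k⁆ := fun i k => rfl
  have hne : ∀ k : ℕ, (-((k : ℂ) + 1)) ≠ 0 := by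
    intro k
    rw [neg_ne_zero]
    exact_mod_cast Nat.succ_ne_zero k
  have hpe : ∀ i k, ⁅e, p i k⁆ = (-((k : ℂ) + 1)) • p i (k + 1) := by
    intro i k
    rw [hpsucc i k, smul_inv_smul₀ (hne k)]
  -- membership of purified family in graded pieces
  have hpmem : ∀ (i : Fin ℓ) (k : ℕ), p i k ∈ G (k : ℤ) := by
    intro i k
    induction k with
    | zero => exact hker _ (h0 i)
    | succ k ih =>
      rw [hpsucc i k]
      have h1 := lie_e_mem G hinternal ρ e hgrade he ih
      have hc : ((k + 1 : ℕ) : ℤ) = (k : ℤ) + 1 := by push_cast; ring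
      rw [hc]
      exact Submodule.smul_mem _ _ h1
  have hrhop : ∀ i k, ⁅ρ, p i (k + 1)⁆ = -⁅e, p i k⁆ := by
    intro i k
    have h1 := hgrade ((k + 1 : ℕ) : ℤ) _ (hpmem i (k + 1))
    rw [hpe i k, neg_smul, neg_neg, h1]
    push_cast
    ring_nf
  -- the "lower Borel" filtration
  set Bl : ℕ → Submodule ℂ g := fun k => ⨆ m : Fin k, G ((m : ℕ) : ℤ) with hBl
  have hBlle : ∀ (k m : ℕ), m < k → G (m : ℤ) ≤ Bl k := fun k m hm =>
    le_iSup (fun m : Fin k => G ((m : ℕ) : ℤ)) ⟨m, hm⟩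
  have hBlproj : ∀ (k : ℕ) (x : g), x ∈ Bl k → ∀ m : ℤ,
      (m < 0 ∨ (k : ℤ) ≤ m) → projL G hinternal m x = 0 := by
    intro k x hx m hm
    refine Submodule.iSup_induction (motive := fun y => projL G hinternal m y = 0)
      (fun m' : Fin k => G ((m' : ℕ) : ℤ)) hx ?_ (map_zero _) ?_
    · intro m' y hy
      refine projL_of_mem_ne G hinternal ?_ hy
      have h2 : ((m' : ℕ) : ℤ) < (k : ℤ) := by exact_mod_cast m'.isLt
      have h3 : (0 : ℤ) ≤ ((m' : ℕ) : ℤ) := Int.natCast_nonneg _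
      omega
    · intro a b ha hb
      rw [map_add, ha, hb, add_zero]
  have hBlE : ∀ (k : ℕ), ∀ x ∈ Bl k, ⁅e, x⁆ ∈ Bl (k + 1) := by
    intro k x hx
    refine Submodule.iSup_induction (motive := fun y => ⁅e, y⁆ ∈ Bl (k + 1))
      (fun m' : Fin k => G ((m' : ℕ) : ℤ)) hx ?_ ?_ ?_
    · intro m' y hy
      have h1 := lie_e_mem G hinternal ρ e hgrade he hy
      have hc : (((m' : ℕ) + 1 : ℕ) : ℤ) = ((m' : ℕ) : ℤ) + 1 := by push_cast; ring
      refine hBlle (k + 1) ((m' : ℕ) + 1) (by omega) ?_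
      rw [hc]
      exact h1
    · show ⁅e, (0 : g)⁆ ∈ Bl (k + 1)
      rw [lie_zero]; exact zero_mem _
    · intro a b ha hb
      show ⁅e, a + b⁆ ∈ Bl (k + 1)
      rw [lie_add]; exact add_mem ha hb
  have hBlof : ∀ (k : ℕ) (x : g),
      (∀ m : ℤ, ¬ (0 ≤ m ∧ m < (k : ℤ)) → projL G hinternal m x = 0) → x ∈ Bl k := by
    intro k x hx
    refine mem_of_projL G hinternal (fun m => 0 ≤ m ∧ m < (k : ℤ)) (Bl k) ?_ x hx
    intro m hm
    lift m to ℕ using hm.1 with n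
    exact hBlle k n (by exact_mod_cast hm.2)
  -- C i k differs from p i k by lower degree terms
  have hCp : ∀ (i : Fin ℓ) (k : ℕ), k ≤ d i → C i k - p i k ∈ Bl k := by
    intro i k
    induction k with
    | zero =>
      intro _
      rw [hp0 i, sub_self]
      exact zero_mem _
    | succ k ih =>
      intro hk
      have hBk := ih (by omega)
      have hD : ⁅ρ, C i (k + 1) - p i (k + 1)⁆ = -⁅e, C i k - p i k⁆ := by
        have h1 := hrec i (k + 1) (Nat.succ_pos k) hk
        have h1' : ⁅ρ, C i (k + 1)⁆ = -⁅e, C i k⁆ := by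
          have h2 : (k + 1) - 1 = k := rfl
          rw [h2] at h1
          exact eq_neg_of_add_eq_zero_left h1
        rw [lie_sub, h1', hrhop i k, lie_sub]
        abel
      have hmemB : ⁅e, C i k - p i k⁆ ∈ Bl (k + 1) := hBlE k _ hBk
      refine hBlof (k + 1) _ fun m hm => ?_
      have hm' : m < 0 ∨ ((k + 1 : ℕ) : ℤ) ≤ m := by push_cast at hm ⊢; omega
      have hmne : (m : ℂ) ≠ 0 := by
        rw [Int.cast_ne_zero]
        rcases hm' with h | h
        · omega
        · have : (0 : ℤ) < ((k + 1 : ℕ) : ℤ) := by positivity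
          omega
      have h5 := projL_lie_rho G hinternal ρ hgrade m (C i (k + 1) - p i (k + 1))
      rw [hD, map_neg, hBlproj (k + 1) _ hmemB m hm', neg_zero] at h5
      exact (smul_eq_zero_iff_right hmne).mp h5.symm
  -- top coefficient of purified family is killed by e
  have hlastp : ∀ i, ⁅e, p i (d i)⁆ = 0 := by
    intro i
    have h1 : ⁅e, p i (d i)⁆ = -⁅e, C i (d i) - p i (d i)⁆ := by
      rw [lie_sub, hlast i]
      abel
    have h2 : ⁅e, C i (d i) - p i (d i)⁆ ∈ Bl (d i + 1) := hBlE _ _ (hCp i (d i) le_rfl)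
    have h3 : ⁅e, p i (d i)⁆ ∈ G ((d i : ℤ) + 1) :=
      lie_e_mem G hinternal ρ e hgrade he (hpmem i (d i))
    have h4 := projL_of_mem G hinternal h3
    rw [h1, map_neg, hBlproj (d i + 1) _ h2 ((d i : ℤ) + 1) (by right; push_cast; omega),
      neg_zero] at h4
    exact h1.trans h4.symm
  -- the purified families span the graded pieces
  set Sp : ℕ → Set g := fun j => {y : g | ∃ i : Fin ℓ, j ≤ d i ∧ y = p i j} with hSp
  have hGP : ∀ j : ℕ, G (j : ℤ) ≤ Submodule.span ℂ (Sp j) := by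
    intro j
    induction j with
    | zero =>
      rw [Nat.cast_zero, ← hspan0]
      refine Submodule.span_mono ?_
      rintro y ⟨i, rfl⟩
      exact ⟨i, Nat.zero_le _, (hp0 i).symm⟩
    | succ j ih =>
      intro y hy
      have hy' : y ∈ G ((j : ℤ) + 1) := by
        have hc : ((j + 1 : ℕ) : ℤ) = (j : ℤ) + 1 := by push_cast; ring
        rwa [hc] at hy
      obtain ⟨x, hxG, hxy⟩ := hsurj j y hy'
      have hx2 : x ∈ Submodule.span ℂ (Sp j) := ih hxG
      have hmap : y ∈ Submodule.map (LieAlgebra.ad ℂ g e) (Submodule.span ℂ (Sp j)) :=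
        ⟨x, hx2, by rw [LieAlgebra.ad_apply]; exact hxy⟩
      rw [Submodule.map_span] at hmap
      refine Submodule.span_le.mpr ?_ hmap
      rintro z ⟨w, ⟨i, hid, rfl⟩, rfl⟩
      show LieAlgebra.ad ℂ g e (p i j) ∈ Submodule.span ℂ (Sp (j + 1))
      rw [LieAlgebra.ad_apply]
      rcases hid.lt_or_eq with h | h
      · rw [hpe i j]
        exact Submodule.smul_mem _ _ (Submodule.subset_span ⟨i, by omega, rfl⟩)
      · rw [h, hlastp i]
        exact zero_mem _
  -- every graded piece lies in the span of the C's
  have hGS : ∀ j : ℕ, G (j : ℤ) ≤ Submodule.span ℂ S := by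
    intro j
    induction j using Nat.strong_induction_on with
    | _ j ih =>
      refine le_trans (hGP j) (Submodule.span_le.mpr ?_)
      rintro y ⟨i, hid, rfl⟩
      have h1 : C i j ∈ Submodule.span ℂ S :=
        Submodule.subset_span ⟨⟨i, ⟨j, by omega⟩⟩, rfl⟩
      have h2 : C i j - p i j ∈ Submodule.span ℂ S := by
        have h4 : Bl j ≤ Submodule.span ℂ S := iSup_le fun m => ih (m : ℕ) m.isLt
        exact h4 (hCp i j hid)
      have h5 := sub_mem h1 h2
      rw [sub_sub_cancel] at h5
      exact h5
  have hspanS : Submodule.span ℂ S = ⨆ j : ℕ, G (j : ℤ) := by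
    apply le_antisymm
    · rw [Submodule.span_le]
      rintro y ⟨⟨i, k⟩, rfl⟩
      have hk : (k : ℕ) ≤ d i := by omega
      have h1 : p i (k : ℕ) ∈ ⨆ j : ℕ, G (j : ℤ) :=
        le_iSup (fun j : ℕ => G (j : ℤ)) (k : ℕ) (hpmem i (k : ℕ))
      have h2 : C i (k : ℕ) - p i (k : ℕ) ∈ ⨆ j : ℕ, G (j : ℤ) := by
        have h4 : Bl (k : ℕ) ≤ ⨆ j : ℕ, G (j : ℤ) :=
          iSup_le fun m => le_iSup (fun j : ℕ => G (j : ℤ)) (m : ℕ)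
        exact h4 (hCp i (k : ℕ) hk)
      have h5 := add_mem h2 h1
      rw [sub_add_cancel] at h5
      exact h5
    · exact iSup_le hGS
  refine ⟨?_, hspanS⟩
  rw [linearIndependent_iff_card_eq_finrank_span]
  have hcard : Fintype.card (Σ i : Fin ℓ, Fin (d i + 1)) = ∑ i : Fin ℓ, (d i + 1) := by
    simp [Fintype.card_sigma]
  rw [hcard, Set.finrank, ← hS, hspanS, hdimb]
end

section
/- Let g be a Lie algebra, z_1,…,z_N ∈ C distinct, and let g_{(z)} ⊂ ⊕_{i=1}^N g((t−z_i)) ⊕ g((t^{-1})) be the image of g-valued rational functions on P^1 regular outside {z_i, ∞} under Laurent expansion. Let M_1,…,M_N be g[[t]]-modules and M_∞ a g[[t]]-module, and let 𝕄_i = Ind_{g[[t−z_i]]⊕C1}^{ĝ} M_i be the induced modules at level κ (similarly at ∞). Then the natural map M_1 ⊗ … ⊗ M_N ⊗ M_∞ → (𝕄_1 ⊗ … ⊗ 𝕄_N ⊗ 𝕄_∞)/g_{(z)} induces an isomorphism (⊗_i 𝕄_i ⊗ 𝕄_∞)/g_{(z)} ≅ (⊗_i M_i ⊗ M_∞)/g,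 where g acts diagonally on the right. -/
open Polynomial

/-- The Laurent expansion of a rational function at the finite point `z`. -/
noncomputable def expandAt (z : ℂ) (r : RatFunc ℂ) : LaurentSeries ℂ :=
  ((RatFunc.laurent z r : RatFunc ℂ) : LaurentSeries ℂ)

/-- The rational function `t ↦ r(1/t)` (used for the expansion at `∞` in the
coordinate `s = t⁻¹`), via `p(1/t) = reverse(p)(t)/t^{deg p}`. -/
noncomputable def ratAtInf (r : RatFunc ℂ) : RatFunc ℂ :=
  (algebraMap (Polynomial ℂ) (RatFunc ℂ) r.num.reverse / RatFunc.X ^ r.num.natDegree) *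
    (RatFunc.X ^ r.denom.natDegree / algebraMap (Polynomial ℂ) (RatFunc ℂ) r.denom.reverse)

noncomputable section FFR

open scoped RatFunc

namespace FFRAux

/-- The coercion `RatFunc ℂ → LaurentSeries ℂ` as a ring hom. -/
def toLS : RatFunc ℂ →+* LaurentSeries ℂ := algebraMap (RatFunc ℂ) (LaurentSeries ℂ)

lemma toLS_apply (f : RatFunc ℂ) : toLS f = (f : LaurentSeries ℂ) := rfl

lemma coe_C' (c : ℂ) : ((RatFunc.C c : RatFunc ℂ) : LaurentSeries ℂ) = HahnSeries.C c := by
  have h := RatFunc.coe_coe (C c)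
  rw [Polynomial.coe_C, PowerSeries.coe_C] at h
  rw [h]; rfl

/-- Regular (power-series-like) Laurent series. -/
def IsReg (x : LaurentSeries ℂ) : Prop := ∃ f : PowerSeries ℂ, HahnSeries.ofPowerSeries ℤ ℂ f = x

lemma ofPowerSeries_coeff_neg (f : PowerSeries ℂ) {n : ℤ} (hn : n < 0) :
    ((HahnSeries.ofPowerSeries ℤ ℂ f)).coeff n = 0 := by
  rw [HahnSeries.ofPowerSeries_apply]
  apply HahnSeries.embDomain_notin_range
  rintro ⟨m, hm⟩
  have : (m : ℤ) = n := hm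
  omega

lemma IsReg.coeff_neg {x : LaurentSeries ℂ} (h : IsReg x) {n : ℤ} (hn : n < 0) : x.coeff n = 0 := by
  obtain ⟨f, rfl⟩ := h; exact ofPowerSeries_coeff_neg f hn

lemma IsReg.mul {x y : LaurentSeries ℂ} (hx : IsReg x) (hy : IsReg y) : IsReg (x * y) := by
  obtain ⟨f, rfl⟩ := hx; obtain ⟨g, rfl⟩ := hy; exact ⟨f * g, map_mul _ _ _⟩

lemma IsReg.one : IsReg (1 : LaurentSeries ℂ) := ⟨1, map_one _⟩

lemma IsReg.pow {x : LaurentSeries ℂ} (hx : IsReg x) (n : ℕ) : IsReg (x ^ n) := by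
  induction n with
  | zero => simpa using IsReg.one
  | succ k ih => rw [pow_succ]; exact ih.mul hx

lemma IsReg.coeff_zero {x : LaurentSeries ℂ} (h : IsReg x) :
    ∀ f, HahnSeries.ofPowerSeries ℤ ℂ f = x → PowerSeries.constantCoeff f = x.coeff 0 := by
  rintro f rfl
  rw [← PowerSeries.coeff_zero_eq_constantCoeff]
  simpa using (HahnSeries.ofPowerSeries_apply_coeff f 0).symm

lemma IsReg.inv {x : LaurentSeries ℂ} (h : IsReg x) (h0 : x.coeff 0 ≠ 0) :
    IsReg x⁻¹ ∧ (x⁻¹).coeff 0 = (x.coeff 0)⁻¹ := by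
  obtain ⟨f, rfl⟩ := h
  have hc : PowerSeries.constantCoeff f = (HahnSeries.ofPowerSeries ℤ ℂ f).coeff 0 :=
    IsReg.coeff_zero ⟨f, rfl⟩ f rfl
  have hf0 : PowerSeries.constantCoeff f ≠ 0 := by rw [hc]; exact h0
  have hinv : HahnSeries.ofPowerSeries ℤ ℂ f * HahnSeries.ofPowerSeries ℤ ℂ f⁻¹ = 1 := by
    rw [← map_mul, PowerSeries.mul_inv_cancel _ hf0, map_one]
  have hx : (HahnSeries.ofPowerSeries ℤ ℂ f)⁻¹ = HahnSeries.ofPowerSeries ℤ ℂ f⁻¹ :=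
    inv_eq_of_mul_eq_one_right hinv
  constructor
  · exact hx ▸ ⟨f⁻¹, rfl⟩
  · rw [hx, ← IsReg.coeff_zero ⟨f⁻¹, rfl⟩ f⁻¹ rfl, PowerSeries.constantCoeff_inv, hc]

lemma IsReg.coeff_zero_mul {x y : LaurentSeries ℂ} (hx : IsReg x) (hy : IsReg y) :
    (x * y).coeff 0 = x.coeff 0 * y.coeff 0 := by
  obtain ⟨f, rfl⟩ := hx; obtain ⟨g, rfl⟩ := hy
  rw [← map_mul]
  rw [← IsReg.coeff_zero ⟨f*g, rfl⟩ (f*g) rfl,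
    ← IsReg.coeff_zero ⟨f, rfl⟩ f rfl, ← IsReg.coeff_zero ⟨g, rfl⟩ g rfl, map_mul]

lemma isReg_toLS_poly (p : ℂ[X]) : IsReg (toLS (algebraMap ℂ[X] (RatFunc ℂ) p)) :=
  ⟨(p : PowerSeries ℂ), by rw [RatFunc.coe_coe]; exact (toLS_apply _).symm⟩

lemma coeff_toLS_poly (p : ℂ[X]) (n : ℕ) :
    (toLS (algebraMap ℂ[X] (RatFunc ℂ) p)).coeff (n : ℤ) = p.coeff n := by
  have : (HahnSeries.ofPowerSeries ℤ ℂ (p : PowerSeries ℂ)) = toLS (algebraMap ℂ[X] (RatFunc ℂ) p) := by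
    rw [RatFunc.coe_coe]; exact (toLS_apply _).symm
  rw [← this, HahnSeries.ofPowerSeries_apply_coeff, Polynomial.coeff_coe]

end FFRAux

namespace FFRAux

/-- Substitution `X ↦ X⁻¹` on polynomials. -/
def phi0 : ℂ[X] →+* RatFunc ℂ := (Polynomial.aeval (RatFunc.X⁻¹ : RatFunc ℂ)).toRingHom

lemma phi0_apply (p : ℂ[X]) : phi0 p = Polynomial.aeval (RatFunc.X⁻¹ : RatFunc ℂ) p := rfl

lemma algebraMap_poly_eq_aeval (p : ℂ[X]) :
    Polynomial.aeval (RatFunc.X : RatFunc ℂ) p = algebraMap ℂ[X] (RatFunc ℂ) p := by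
  have := Polynomial.aeval_algHom_apply (IsScalarTower.toAlgHom ℂ ℂ[X] (RatFunc ℂ)) X p
  simpa [Polynomial.aeval_X_left_apply, RatFunc.algebraMap_X] using this

/-- `reverse p = p(1/X) * X^(natDegree p)`. -/
lemma reverse_eq (p : ℂ[X]) :
    algebraMap ℂ[X] (RatFunc ℂ) p.reverse = phi0 p * RatFunc.X ^ p.natDegree := by
  letI : Invertible (RatFunc.X⁻¹ : RatFunc ℂ) :=
    ⟨RatFunc.X, by rw [mul_inv_cancel₀ RatFunc.X_ne_zero], by rw [inv_mul_cancel₀ RatFunc.X_ne_zero]⟩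
  have h := Polynomial.eval₂_reverse_mul_pow (algebraMap ℂ (RatFunc ℂ))
    (RatFunc.X⁻¹ : RatFunc ℂ) p
  have hinv : (⅟(RatFunc.X⁻¹ : RatFunc ℂ)) = RatFunc.X := rfl
  rw [hinv] at h
  have h1 : Polynomial.eval₂ (algebraMap ℂ (RatFunc ℂ)) RatFunc.X p.reverse
      = algebraMap ℂ[X] (RatFunc ℂ) p.reverse := by
    rw [← Polynomial.aeval_def, algebraMap_poly_eq_aeval]
  have h2 : Polynomial.eval₂ (algebraMap ℂ (RatFunc ℂ)) (RatFunc.X⁻¹ : RatFunc ℂ) p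
      = phi0 p := by rw [← Polynomial.aeval_def, phi0_apply]
  rw [h1, h2] at h
  have hX : (RatFunc.X : RatFunc ℂ) ≠ 0 := RatFunc.X_ne_zero
  rw [← h, mul_assoc, inv_pow, inv_mul_cancel₀ (pow_ne_zero _ hX), mul_one]

lemma phi0_ne_zero {p : ℂ[X]} (hp : p ≠ 0) : phi0 p ≠ 0 := by
  intro h
  have h2 := reverse_eq p
  rw [h, zero_mul] at h2
  have hr : p.reverse = 0 := by
    by_contra hr
    exact RatFunc.algebraMap_ne_zero hr h2
  exact hp (Polynomial.reverse_eq_zero.mp hr)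

/-- Substitution `X ↦ X⁻¹` on rational functions. -/
def phi : RatFunc ℂ →+* RatFunc ℂ :=
  RatFunc.liftRingHom phi0 (by
    intro p hp
    have hp' : p ≠ 0 := nonZeroDivisors.ne_zero hp
    exact Submonoid.mem_comap.mpr (mem_nonZeroDivisors_of_ne_zero (phi0_ne_zero hp')))

lemma phi_div (p q : ℂ[X]) :
    phi (algebraMap ℂ[X] (RatFunc ℂ) p / algebraMap ℂ[X] (RatFunc ℂ) q) = phi0 p / phi0 q :=
  RatFunc.liftRingHom_apply_div _ _ _ _

lemma phi_algebraMap (p : ℂ[X]) : phi (algebraMap ℂ[X] (RatFunc ℂ) p) = phi0 p := by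
  have := phi_div p 1
  simpa using this

lemma ratAtInf_eq (r : RatFunc ℂ) : ratAtInf r = phi r := by
  conv_rhs => rw [← RatFunc.num_div_denom r]
  rw [phi_div]
  unfold ratAtInf
  rw [reverse_eq r.num, reverse_eq r.denom]
  have hX : (RatFunc.X : RatFunc ℂ) ≠ 0 := RatFunc.X_ne_zero
  have hd : phi0 r.denom ≠ 0 := phi0_ne_zero (RatFunc.denom_ne_zero r)
  field_simp

def Psi : RatFunc ℂ →+* LaurentSeries ℂ := toLS.comp phi

def Phi (w : ℂ) : RatFunc ℂ →+* LaurentSeries ℂ := toLS.comp (RatFunc.laurent w).toRingHom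

lemma expandAt_eq (w : ℂ) (r : RatFunc ℂ) : expandAt w r = Phi w r := by
  unfold expandAt Phi
  rw [RingHom.comp_apply, toLS_apply]; rfl

lemma ratAtInf_coe (r : RatFunc ℂ) : ((ratAtInf r : RatFunc ℂ) : LaurentSeries ℂ) = Psi r := by
  rw [ratAtInf_eq]
  unfold Psi
  rw [RingHom.comp_apply, toLS_apply]

end FFRAux

namespace FFRAux

/-- Coefficient extraction as an additive hom. -/
def coeffHom (n : ℤ) : LaurentSeries ℂ →+ ℂ where
  toFun x := x.coeff n
  map_zero' := rfl
  map_add' _ _ := HahnSeries.coeff_add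

lemma coeffHom_apply (n : ℤ) (x : LaurentSeries ℂ) : coeffHom n x = x.coeff n := rfl

lemma single_inv' (a : ℤ) : ((HahnSeries.single a 1 : LaurentSeries ℂ))⁻¹
    = HahnSeries.single (-a) (1 : ℂ) := by
  refine inv_eq_of_mul_eq_one_right ?_
  rw [HahnSeries.single_mul_single, add_neg_cancel, one_mul, HahnSeries.single_zero_one]

lemma C_mul_coeff (a : ℂ) (x : LaurentSeries ℂ) (n : ℤ) :
    (HahnSeries.C a * x).coeff n = a * x.coeff n := by
  rw [HahnSeries.C_apply]
  have := HahnSeries.coeff_single_mul_add (r := a) (x := x) (a := n) (b := (0:ℤ))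
  simpa using this

/-- Atoms at a finite point. -/
lemma Phi_C (w : ℂ) (c : ℂ) : Phi w (RatFunc.C c) = HahnSeries.C c := by
  unfold Phi
  rw [RingHom.comp_apply, AlgHom.toRingHom_eq_coe, RingHom.coe_coe, RatFunc.laurent_C,
    toLS_apply, coe_C']

lemma Phi_X_pow_isReg (w : ℂ) (b : ℕ) : IsReg (Phi w (RatFunc.X ^ b)) := by
  rw [map_pow]
  refine IsReg.pow ?_ b
  unfold Phi
  rw [RingHom.comp_apply, AlgHom.toRingHom_eq_coe, RingHom.coe_coe, RatFunc.laurent_X]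
  have : (RatFunc.X + RatFunc.C w : RatFunc ℂ)
      = algebraMap ℂ[X] (RatFunc ℂ) (X + C w) := by
    rw [map_add, RatFunc.algebraMap_X, RatFunc.algebraMap_C]
  rw [this]
  exact isReg_toLS_poly _

lemma Phi_inv_atom_ne (w v : ℂ) (hvw : v ≠ w) (a : ℕ) :
    IsReg (Phi w (((RatFunc.X - RatFunc.C v)⁻¹) ^ a)) := by
  rw [map_pow]
  refine IsReg.pow ?_ a
  rw [map_inv₀]
  have h1 : Phi w (RatFunc.X - RatFunc.C v)
      = toLS (algebraMap ℂ[X] (RatFunc ℂ) (X + C (w - v))) := by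
    unfold Phi
    rw [RingHom.comp_apply, AlgHom.toRingHom_eq_coe, RingHom.coe_coe, map_sub,
      RatFunc.laurent_X, RatFunc.laurent_C, map_add, RatFunc.algebraMap_X, RatFunc.algebraMap_C]
    congr 1
    rw [map_sub]
    ring
  rw [h1]
  have h0 : (toLS (algebraMap ℂ[X] (RatFunc ℂ) (X + C (w - v)))).coeff 0 ≠ 0 := by
    rw [show ((0:ℤ)) = ((0:ℕ):ℤ) by norm_num, coeff_toLS_poly]
    simp [sub_eq_zero]
    exact fun h => hvw (by rw [h])
  exact ((isReg_toLS_poly _).inv h0).1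

lemma Phi_inv_atom_self (w : ℂ) (a : ℕ) :
    Phi w (((RatFunc.X - RatFunc.C w)⁻¹) ^ a)
      = HahnSeries.single (-(a:ℤ)) (1:ℂ) := by
  rw [map_pow, map_inv₀]
  have h1 : Phi w (RatFunc.X - RatFunc.C w) = HahnSeries.single (1:ℤ) (1:ℂ) := by
    unfold Phi
    rw [RingHom.comp_apply, AlgHom.toRingHom_eq_coe, RingHom.coe_coe, map_sub,
      RatFunc.laurent_X, RatFunc.laurent_C]
    rw [add_sub_cancel_right, toLS_apply, RatFunc.coe_X]
  rw [h1, single_inv', HahnSeries.single_pow]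
  congr 1
  · simp
  · simp

/-- Atoms at infinity. -/
lemma Psi_C (c : ℂ) : Psi (RatFunc.C c) = HahnSeries.C c := by
  unfold Psi
  rw [RingHom.comp_apply]
  have : RatFunc.C c = algebraMap ℂ[X] (RatFunc ℂ) (C c) := (RatFunc.algebraMap_C c).symm
  rw [this, phi_algebraMap, phi0_apply, Polynomial.aeval_C, RatFunc.algebraMap_eq_C,
    toLS_apply, coe_C']

lemma Psi_X_pow (b : ℕ) : Psi (RatFunc.X ^ b) = HahnSeries.single (-(b:ℤ)) (1:ℂ) := by
  rw [map_pow]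
  have h1 : Psi RatFunc.X = HahnSeries.single (-1:ℤ) (1:ℂ) := by
    unfold Psi
    rw [RingHom.comp_apply]
    have : (RatFunc.X : RatFunc ℂ) = algebraMap ℂ[X] (RatFunc ℂ) X := RatFunc.algebraMap_X.symm
    rw [this, phi_algebraMap, phi0_apply, Polynomial.aeval_X, map_inv₀, toLS_apply, RatFunc.coe_X,
      single_inv']
  rw [h1, HahnSeries.single_pow]
  congr 1
  · simp
  · simp

lemma Psi_inv_atom (v : ℂ) (a : ℕ) :
    IsReg (Psi (((RatFunc.X - RatFunc.C v)⁻¹) ^ a)) := by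
  rw [map_pow]
  refine IsReg.pow ?_ a
  rw [map_inv₀, map_sub]
  have hX : Psi RatFunc.X = HahnSeries.single (-1:ℤ) (1:ℂ) := by
    simpa using Psi_X_pow 1
  rw [hX, Psi_C]
  have hpoly : toLS (algebraMap ℂ[X] (RatFunc ℂ) (1 - C v * X))
      = 1 - HahnSeries.C v * HahnSeries.single (1:ℤ) (1:ℂ) := by
    rw [map_sub, map_one, map_mul, RatFunc.algebraMap_X, RatFunc.algebraMap_C, map_sub, map_one,
      map_mul]
    congr 2
    · rw [toLS_apply, coe_C']
    · rw [toLS_apply, RatFunc.coe_X]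
  have key : (HahnSeries.single (-1:ℤ) (1:ℂ) - HahnSeries.C v)
      = HahnSeries.single (-1:ℤ) (1:ℂ) * toLS (algebraMap ℂ[X] (RatFunc ℂ) (1 - C v * X)) := by
    rw [hpoly, mul_sub, mul_one]
    congr 1
    rw [HahnSeries.C_apply, HahnSeries.single_mul_single, HahnSeries.single_mul_single]
    simp
  rw [key, mul_inv]
  refine IsReg.mul ?_ ?_
  · rw [single_inv', neg_neg]
    exact ⟨PowerSeries.X, HahnSeries.ofPowerSeries_X⟩
  · have h0 : (toLS (algebraMap ℂ[X] (RatFunc ℂ) (1 - C v * X))).coeff 0 ≠ 0 := by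
      rw [show ((0:ℤ)) = ((0:ℕ):ℤ) by norm_num, coeff_toLS_poly]
      simp
    exact ((isReg_toLS_poly _).inv h0).1

end FFRAux

namespace FFRAux

variable {N : ℕ}

/-- Rational functions whose denominator is a product of `(X - z i)`'s. -/
def SP (z : Fin N → ℂ) (r : RatFunc ℂ) : Prop :=
  ∃ (p : ℂ[X]) (m : Fin N → ℕ),
    r = algebraMap ℂ[X] (RatFunc ℂ) p
        / algebraMap ℂ[X] (RatFunc ℂ) (∏ i, (X - C (z i)) ^ (m i))

lemma prod_ne_zero (z : Fin N → ℂ) (m : Fin N → ℕ) :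
    (∏ i, (X - C (z i)) ^ (m i) : ℂ[X]) ≠ 0 := by
  apply Finset.prod_ne_zero_iff.mpr
  intro i _
  exact pow_ne_zero _ (X_sub_C_ne_zero (z i))

lemma SP.algebraMap' (z : Fin N → ℂ) (p : ℂ[X]) : SP z (algebraMap ℂ[X] (RatFunc ℂ) p) := by
  refine ⟨p, 0, ?_⟩
  simp

lemma SP.atom (z : Fin N → ℂ) (i : Fin N) (a : ℕ) :
    SP z (((RatFunc.X - RatFunc.C (z i))⁻¹) ^ a) := by
  classical
  refine ⟨1, fun j => if j = i then a else 0, ?_⟩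
  rw [map_one]
  have : (∏ j, (X - C (z j)) ^ (if j = i then a else 0) : ℂ[X]) = (X - C (z i)) ^ a := by
    rw [Finset.prod_eq_single i]
    · simp
    · intro j _ hj; simp [hj]
    · intro h; exact absurd (Finset.mem_univ i) h
  rw [this, map_pow, map_sub, RatFunc.algebraMap_X, RatFunc.algebraMap_C, one_div, inv_pow]

lemma SP.add {z : Fin N → ℂ} {r s : RatFunc ℂ} (hr : SP z r) (hs : SP z s) : SP z (r + s) := by
  obtain ⟨p1, m1, rfl⟩ := hr
  obtain ⟨p2, m2, rfl⟩ := hs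
  refine ⟨p1 * ∏ i, (X - C (z i)) ^ (m2 i) + p2 * ∏ i, (X - C (z i)) ^ (m1 i), m1 + m2, ?_⟩
  have h1 : (algebraMap ℂ[X] (RatFunc ℂ)) (∏ i, (X - C (z i)) ^ (m1 i)) ≠ 0 :=
    RatFunc.algebraMap_ne_zero (prod_ne_zero z m1)
  have h2 : (algebraMap ℂ[X] (RatFunc ℂ)) (∏ i, (X - C (z i)) ^ (m2 i)) ≠ 0 :=
    RatFunc.algebraMap_ne_zero (prod_ne_zero z m2)
  have hprod : (∏ i, (X - C (z i)) ^ ((m1 + m2) i) : ℂ[X])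
      = (∏ i, (X - C (z i)) ^ (m1 i)) * (∏ i, (X - C (z i)) ^ (m2 i)) := by
    rw [← Finset.prod_mul_distrib]
    refine Finset.prod_congr rfl fun i _ => ?_
    rw [Pi.add_apply, pow_add]
  rw [div_add_div _ _ h1 h2, hprod]
  rw [map_add, map_mul, map_mul, map_mul]
  ring

lemma SP.C_mul {z : Fin N → ℂ} {r : RatFunc ℂ} (c : ℂ) (hr : SP z r) :
    SP z (RatFunc.C c * r) := by
  obtain ⟨p, m, rfl⟩ := hr
  refine ⟨C c * p, m, ?_⟩
  rw [map_mul, RatFunc.algebraMap_C, mul_div_assoc]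

lemma SP.sum {z : Fin N → ℂ} {α : Type*} (s : Finset α) (f : α → RatFunc ℂ)
    (h : ∀ a ∈ s, SP z (f a)) : SP z (∑ a ∈ s, f a) := by
  classical
  induction s using Finset.induction_on with
  | empty => simpa using SP.algebraMap' z 0
  | @insert a s' hx ih =>
    rw [Finset.sum_insert hx]
    exact (h a (Finset.mem_insert_self a s')).add
      (ih fun b hb => h b (Finset.mem_insert_of_mem hb))

/-- The denominator of an `SP` function does not vanish outside the `z i`. -/
lemma SP.denom_eval_ne {z : Fin N → ℂ} {r : RatFunc ℂ} (hr : SP z r)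
    {w : ℂ} (hw : w ∉ Set.range z) : Polynomial.eval w r.denom ≠ 0 := by
  obtain ⟨p, m, heq⟩ := hr
  have hq : (∏ i, (X - C (z i)) ^ (m i) : ℂ[X]) ≠ 0 := prod_ne_zero z m
  have hdvd : r.denom ∣ ∏ i, (X - C (z i)) ^ (m i) :=
    (RatFunc.denom_dvd hq).mpr ⟨p, heq⟩
  intro h0
  have hXw : (X - C w : ℂ[X]) ∣ r.denom := dvd_iff_isRoot.mpr h0
  have : (X - C w : ℂ[X]) ∣ ∏ i, (X - C (z i)) ^ (m i) := hXw.trans hdvd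
  have hroot : Polynomial.eval w (∏ i, (X - C (z i)) ^ (m i) : ℂ[X]) = 0 := by
    obtain ⟨s, hs⟩ := this
    rw [hs]
    simp
  rw [Polynomial.eval_prod] at hroot
  obtain ⟨i, _, hi⟩ := Finset.prod_eq_zero_iff.mp hroot
  rw [Polynomial.eval_pow, Polynomial.eval_sub, Polynomial.eval_X, Polynomial.eval_C] at hi
  have : w = z i := sub_eq_zero.mp (pow_eq_zero_iff'.mp hi).1
  exact hw ⟨i, this.symm⟩

end FFRAux

namespace FFRAux

/-- If a quotient has a genuine pole at 0, some negative Laurent coefficient is nonzero. -/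
lemma pole_detect (p q : ℂ[X]) (hp : p.coeff 0 ≠ 0) (hq0 : q.coeff 0 = 0) (hq : q ≠ 0) :
    ∃ n : ℤ, n < 0 ∧
      (toLS (algebraMap ℂ[X] (RatFunc ℂ) p / algebraMap ℂ[X] (RatFunc ℂ) q)).coeff n ≠ 0 := by
  set k := q.natTrailingDegree with hk
  have hk1 : 1 ≤ k := by
    by_contra h
    push_neg at h
    have hk0 : q.natTrailingDegree = 0 := by omega
    exact hq (Polynomial.coeff_natTrailingDegree_eq_zero.mp (by rw [hk0]; exact hq0))
  have hdvd : (X : ℂ[X]) ^ k ∣ q := by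
    rw [Polynomial.X_pow_dvd_iff]
    intro d hd
    exact Polynomial.coeff_eq_zero_of_lt_natTrailingDegree hd
  obtain ⟨q2, hq2⟩ := hdvd
  have hq2c : q2.coeff 0 ≠ 0 := by
    have h1 : q.coeff k = q2.coeff 0 := by
      rw [hq2]
      simpa using Polynomial.coeff_X_pow_mul q2 k 0
    rw [← h1]
    exact fun h => hq (Polynomial.coeff_natTrailingDegree_eq_zero.mp h)
  have hq2ne : q2 ≠ 0 := fun h => hq (by rw [hq2, h, mul_zero])
  have hyQ0 : (toLS (algebraMap ℂ[X] (RatFunc ℂ) q2)).coeff 0 ≠ 0 := by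
    rw [show ((0:ℤ)) = ((0:ℕ):ℤ) by norm_num, coeff_toLS_poly]; exact hq2c
  obtain ⟨hinvreg, hinvcoeff⟩ := (isReg_toLS_poly q2).inv hyQ0
  have hy0 : ((toLS (algebraMap ℂ[X] (RatFunc ℂ) p))
      * (toLS (algebraMap ℂ[X] (RatFunc ℂ) q2))⁻¹).coeff 0 ≠ 0 := by
    rw [(isReg_toLS_poly p).coeff_zero_mul hinvreg, hinvcoeff]
    refine mul_ne_zero ?_ (inv_ne_zero hyQ0)
    rw [show ((0:ℤ)) = ((0:ℕ):ℤ) by norm_num, coeff_toLS_poly]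
    exact hp
  refine ⟨-(k:ℤ), by omega, ?_⟩
  have hXk : toLS (algebraMap ℂ[X] (RatFunc ℂ) ((X:ℂ[X]) ^ k))
      = HahnSeries.single ((k:ℤ)) (1:ℂ) := by
    rw [map_pow, map_pow, RatFunc.algebraMap_X, toLS_apply, RatFunc.coe_X,
      HahnSeries.single_pow]
    simp
  have key : toLS (algebraMap ℂ[X] (RatFunc ℂ) p / algebraMap ℂ[X] (RatFunc ℂ) q)
      = HahnSeries.single (-(k:ℤ)) (1:ℂ)
        * ((toLS (algebraMap ℂ[X] (RatFunc ℂ) p))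
            * (toLS (algebraMap ℂ[X] (RatFunc ℂ) q2))⁻¹) := by
    rw [hq2, map_mul, map_div₀, map_mul, hXk]
    rw [div_eq_mul_inv, mul_inv, ← single_inv']
    ring
  rw [key]
  have hs := HahnSeries.coeff_single_mul_add (r := (1:ℂ))
    (x := (toLS (algebraMap ℂ[X] (RatFunc ℂ) p)) * (toLS (algebraMap ℂ[X] (RatFunc ℂ) q2))⁻¹)
    (a := (0:ℤ)) (b := -(k:ℤ))
  rw [zero_add] at hs
  rw [hs, one_mul]
  exact hy0

/-- Negative coefficients of `Psi` of a polynomial read off positive coefficients. -/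
lemma Psi_algebraMap_coeff (p : ℂ[X]) (k : ℕ) (hk : 1 ≤ k) :
    (Psi (algebraMap ℂ[X] (RatFunc ℂ) p)).coeff (-(k:ℤ)) = p.coeff k := by
  have hsum : algebraMap ℂ[X] (RatFunc ℂ) p
      = ∑ i ∈ Finset.range (p.natDegree + 1), RatFunc.C (p.coeff i) * RatFunc.X ^ i := by
    rw [← algebraMap_poly_eq_aeval, Polynomial.aeval_eq_sum_range]
    refine Finset.sum_congr rfl fun i _ => ?_
    rw [Algebra.smul_def, RatFunc.algebraMap_eq_C]
  rw [hsum, map_sum, ← coeffHom_apply, map_sum]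
  have hterm : ∀ i ∈ Finset.range (p.natDegree + 1),
      coeffHom (-(k:ℤ)) (Psi (RatFunc.C (p.coeff i) * RatFunc.X ^ i))
        = if (-(k:ℤ)) = (-(i:ℤ)) then p.coeff i else 0 := by
    intro i _
    rw [map_mul, Psi_C, Psi_X_pow, coeffHom_apply, C_mul_coeff, HahnSeries.coeff_single]
    split <;> simp
  rw [Finset.sum_congr rfl hterm]
  by_cases hmem : k ≤ p.natDegree
  · have : ∑ i ∈ Finset.range (p.natDegree + 1), (if (-(k:ℤ)) = (-(i:ℤ)) then p.coeff i else 0)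
        = ∑ i ∈ Finset.range (p.natDegree + 1), (if k = i then p.coeff i else 0) := by
      refine Finset.sum_congr rfl fun i _ => ?_
      by_cases h : k = i
      · subst h; simp
      · have h2 : ¬ ((-(k:ℤ)) = (-(i:ℤ))) := by omega
        simp [h, h2]
    rw [this, Finset.sum_ite_eq]
    simp [Nat.lt_succ_of_le hmem]
  · push_neg at hmem
    rw [Polynomial.coeff_eq_zero_of_natDegree_lt hmem]
    apply Finset.sum_eq_zero
    intro i hi
    rw [Finset.mem_range] at hi
    have : ¬ ((-(k:ℤ)) = (-(i:ℤ))) := by omega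
    simp [this]

lemma eq_algebraMap_num_of_denom_eq_one {r : RatFunc ℂ} (h : r.denom = 1) :
    r = algebraMap ℂ[X] (RatFunc ℂ) r.num := by
  conv_lhs => rw [← RatFunc.num_div_denom r]
  rw [h, map_one, div_one]

/-- A monic complex polynomial with no roots is 1. -/
lemma monic_no_roots_eq_one {p : ℂ[X]} (hm : p.Monic) (h : ∀ w : ℂ, Polynomial.eval w p ≠ 0) :
    p = 1 := by
  by_contra hne
  have hdeg : p.natDegree ≠ 0 := fun h0 => hne ((hm.natDegree_eq_zero).mp h0)
  have : p.degree ≠ 0 := by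
    rw [Polynomial.degree_eq_natDegree hm.ne_zero]
    exact_mod_cast fun hh => hdeg (by exact_mod_cast hh)
  obtain ⟨w, hw⟩ := IsAlgClosed.exists_root p this
  exact h w hw

/-- Expansion of a rational function at `w` as a quotient of Taylor expansions. -/
lemma Phi_eq_taylor (w : ℂ) (r : RatFunc ℂ) :
    Phi w r = toLS (algebraMap ℂ[X] (RatFunc ℂ) (Polynomial.taylor w r.num)
      / algebraMap ℂ[X] (RatFunc ℂ) (Polynomial.taylor w r.denom)) := by
  unfold Phi
  rw [RingHom.comp_apply, AlgHom.toRingHom_eq_coe, RingHom.coe_coe]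
  congr 1
  conv_lhs => rw [← RatFunc.num_div_denom r]
  rw [RatFunc.laurent_div]

end FFRAux

namespace FFRAux

lemma uniq {N : ℕ} (z : Fin N → ℂ) (u : ℂ) (hu : u ∉ Set.range z) (r1 r2 : RatFunc ℂ)
    (hd1 : ∀ w : ℂ, w ∉ Set.range z → Polynomial.eval w r1.denom ≠ 0)
    (hd2 : ∀ w : ℂ, w ∉ Set.range z → Polynomial.eval w r2.denom ≠ 0)
    (he1 : RatFunc.eval (RingHom.id ℂ) u r1 = 0)
    (he2 : RatFunc.eval (RingHom.id ℂ) u r2 = 0)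
    (hzc : ∀ (i : Fin N) (n : ℤ), n < 0 → (Phi (z i) r1).coeff n = (Phi (z i) r2).coeff n)
    (hic : ∀ n : ℤ, n < 0 → (Psi r1).coeff n = (Psi r2).coeff n) : r1 = r2 := by
  by_cases hd0 : r1 - r2 = 0
  · exact sub_eq_zero.mp hd0
  set d := r1 - r2 with hdd
  have hPhid : ∀ (i : Fin N) (n : ℤ), n < 0 → (Phi (z i) d).coeff n = 0 := by
    intro i n hn
    rw [hdd, map_sub, HahnSeries.coeff_sub, hzc i n hn, sub_self]
  have hPsid : ∀ n : ℤ, n < 0 → (Psi d).coeff n = 0 := by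
    intro n hn
    rw [hdd, map_sub, HahnSeries.coeff_sub, hic n hn, sub_self]
  -- the denominator of d has no roots
  have hdroot : ∀ w : ℂ, Polynomial.eval w d.denom ≠ 0 := by
    intro w h0
    have hw : w ∈ Set.range z := by
      by_contra hw
      have h1 : d.denom ∣ r1.denom * (-r2).denom := by
        rw [hdd, sub_eq_add_neg]
        exact RatFunc.denom_add_dvd r1 (-r2)
      have hnegdvd : (-r2).denom ∣ r2.denom := by
        refine (RatFunc.denom_dvd (RatFunc.denom_ne_zero r2)).mpr ⟨-r2.num, ?_⟩
        rw [map_neg, neg_div, RatFunc.num_div_denom]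
      have e1 : Polynomial.eval w r1.denom ≠ 0 := hd1 w hw
      have e2 : Polynomial.eval w (-r2).denom ≠ 0 := by
        obtain ⟨s, hs⟩ := hnegdvd
        intro h
        apply hd2 w hw
        rw [hs, Polynomial.eval_mul, h, zero_mul]
      obtain ⟨s, hs⟩ := h1
      have hzero : Polynomial.eval w (r1.denom * (-r2).denom) = 0 := by
        rw [hs, Polynomial.eval_mul, h0, zero_mul]
      rw [Polynomial.eval_mul] at hzero
      rcases mul_eq_zero.mp hzero with h | h
      exacts [e1 h, e2 h]
    obtain ⟨i, rfl⟩ := hw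
    have hnum : Polynomial.eval (z i) d.num ≠ 0 := by
      obtain ⟨a, b, hab⟩ := RatFunc.isCoprime_num_denom d
      intro h
      have hone := congrArg (Polynomial.eval (z i)) hab
      simp only [Polynomial.eval_add, Polynomial.eval_mul, h, h0, mul_zero, add_zero,
        Polynomial.eval_one] at hone
      exact one_ne_zero hone.symm
    have hp0 : (Polynomial.taylor (z i) d.num).coeff 0 ≠ 0 := by
      rw [Polynomial.taylor_coeff_zero]; exact hnum
    have hq0 : (Polynomial.taylor (z i) d.denom).coeff 0 = 0 := by
      rw [Polynomial.taylor_coeff_zero]; exact h0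
    have hqne : Polynomial.taylor (z i) d.denom ≠ 0 := by
      intro h
      apply RatFunc.denom_ne_zero d
      have := Polynomial.taylor_injective (z i) (by rw [h, map_zero] :
        Polynomial.taylor (z i) d.denom = Polynomial.taylor (z i) 0)
      exact this
    obtain ⟨n, hn, hne⟩ := pole_detect _ _ hp0 hq0 hqne
    rw [← Phi_eq_taylor] at hne
    exact hne (hPhid i n hn)
  have hone : d.denom = 1 := monic_no_roots_eq_one (RatFunc.monic_denom d) hdroot
  have hdp : d = algebraMap ℂ[X] (RatFunc ℂ) d.num := eq_algebraMap_num_of_denom_eq_one hone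
  have hconst : ∀ k : ℕ, 1 ≤ k → d.num.coeff k = 0 := by
    intro k hk
    have h := hPsid (-(k:ℤ)) (by omega)
    rw [hdp] at h
    rw [← Psi_algebraMap_coeff d.num k hk]
    exact h
  have hnd : d.num.natDegree = 0 := by
    by_contra h
    have h1 : 1 ≤ d.num.natDegree := Nat.one_le_iff_ne_zero.mpr h
    exact Polynomial.leadingCoeff_ne_zero.mpr (RatFunc.num_ne_zero hd0) (hconst _ h1)
  have hC : d = RatFunc.C (d.num.coeff 0) := by
    conv_lhs => rw [hdp, Polynomial.eq_C_of_natDegree_eq_zero hnd]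
    rw [RatFunc.algebraMap_C]
  have hr1 : r1 = r2 + RatFunc.C (d.num.coeff 0) := by
    rw [← hC, hdd]; ring
  have heval : RatFunc.eval (RingHom.id ℂ) u r1
      = RatFunc.eval (RingHom.id ℂ) u r2 + d.num.coeff 0 := by
    rw [hr1, RatFunc.eval_add _ _ (hd2 u hu) (by rw [RatFunc.denom_C]; simp), RatFunc.eval_C]
    rfl
  rw [he1, he2, zero_add] at heval
  rw [hr1, ← heval, map_zero, add_zero]

end FFRAux

open FFRAux

/-- key vector-space decomposition behind the isomorphism of
coinvariants, Lemma 1 of [FFR]: one has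
`⊕_i ℂ((t-z_i)) ⊕ ℂ((t⁻¹)) = (⊕_i ℂ[[t-z_i]] ⊕ ℂ[[t⁻¹]]) ⊕ g⁰_{(z)}`,
i.e. given arbitrary Laurent tails `F_i` at the points `z_i` and `F_∞` at `∞`,
there is a *unique* rational function `r` on `P¹`, regular outside
`{z_1,…,z_N,∞}` and vanishing at the auxiliary point `u`, whose principal part
at each `z_i` matches that of `F_i` and whose principal part at `∞` (in the
coordinate `s = t⁻¹`) matches that of `F_∞`.  (The `g`-valued statement follows
componentwise.) -/
theorem rational_function_principal_part_decomposition
    {N : ℕ} (z : Fin N → ℂ) (hz : Function.Injective z)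
    (u : ℂ) (hu : u ∉ Set.range z)
    (F : Fin N → LaurentSeries ℂ) (Finf : LaurentSeries ℂ) :
    ∃! r : RatFunc ℂ,
      (∀ w : ℂ, w ∉ Set.range z → Polynomial.eval w r.denom ≠ 0) ∧
      RatFunc.eval (RingHom.id ℂ) u r = 0 ∧
      (∀ (i : Fin N) (n : ℤ), n < 0 → (expandAt (z i) r).coeff n = (F i).coeff n) ∧
      (∀ n : ℤ, n < 0 → ((ratAtInf r : RatFunc ℂ) : LaurentSeries ℂ).coeff n
        = Finf.coeff n) := by
  classical
  set T : Fin N → Finset ℤ := fun i => Finset.Ico (min ((F i).order) 0) 0 with hT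
  set Tinf : Finset ℤ := Finset.Ico (min Finf.order 0) 0 with hTinf
  set g : RatFunc ℂ :=
    (∑ i : Fin N, ∑ k ∈ T i,
        RatFunc.C ((F i).coeff k) * ((RatFunc.X - RatFunc.C (z i))⁻¹) ^ k.natAbs)
    + ∑ k ∈ Tinf, RatFunc.C (Finf.coeff k) * RatFunc.X ^ k.natAbs with hg
  set c : ℂ := RatFunc.eval (RingHom.id ℂ) u g with hc
  set r : RatFunc ℂ := g + RatFunc.C (-c) with hrdef
  have hSPg : SP z g := by
    refine SP.add ?_ ?_
    · refine SP.sum _ _ fun i _ => SP.sum _ _ fun k _ => SP.C_mul _ (SP.atom z i _)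
    · refine SP.sum _ _ fun k _ => SP.C_mul _ ?_
      have h := SP.algebraMap' z (Polynomial.X ^ k.natAbs)
      rwa [map_pow, RatFunc.algebraMap_X] at h
  have hSPr : SP z r := by
    refine hSPg.add ?_
    have h := SP.algebraMap' z (Polynomial.C (-c))
    rwa [RatFunc.algebraMap_C] at h
  -- general coefficient formula
  have hcoeff : ∀ (Θ : RatFunc ℂ →+* LaurentSeries ℂ),
      (∀ a : ℂ, Θ (RatFunc.C a) = HahnSeries.C a) → ∀ n : ℤ, (Θ r).coeff n
        = ((∑ i : Fin N, ∑ k ∈ T i,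
            ((F i).coeff k) * (Θ (((RatFunc.X - RatFunc.C (z i))⁻¹) ^ k.natAbs)).coeff n)
          + ∑ k ∈ Tinf, (Finf.coeff k) * (Θ (RatFunc.X ^ k.natAbs)).coeff n)
          + (HahnSeries.C (-c) : LaurentSeries ℂ).coeff n := by
    intro Θ hΘ n
    rw [hrdef, hg, map_add, map_add, map_sum, map_sum, HahnSeries.coeff_add,
      HahnSeries.coeff_add, hΘ]
    congr 2
    · rw [← coeffHom_apply, map_sum]
      refine Finset.sum_congr rfl fun i _ => ?_
      rw [map_sum, map_sum]
      refine Finset.sum_congr rfl fun k _ => ?_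
      rw [coeffHom_apply, map_mul, hΘ, C_mul_coeff]
    · rw [← coeffHom_apply, map_sum]
      refine Finset.sum_congr rfl fun k _ => ?_
      rw [coeffHom_apply, map_mul, hΘ, C_mul_coeff]
  have hCneg : ∀ n : ℤ, n < 0 → (HahnSeries.C (-c) : LaurentSeries ℂ).coeff n = 0 := by
    intro n hn
    rw [HahnSeries.C_apply, HahnSeries.coeff_single]
    have : n ≠ 0 := by omega
    simp [this]
  -- property 1
  have hA : ∀ w : ℂ, w ∉ Set.range z → Polynomial.eval w r.denom ≠ 0 :=
    fun w hw => hSPr.denom_eval_ne hw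
  -- property 2
  have hB : RatFunc.eval (RingHom.id ℂ) u r = 0 := by
    rw [hrdef, RatFunc.eval_add _ _ (hSPg.denom_eval_ne hu)
      (by rw [RatFunc.denom_C]; simp), RatFunc.eval_C]
    rw [← hc]
    simp
  -- property 3
  have hC : ∀ (i : Fin N) (n : ℤ), n < 0 → (expandAt (z i) r).coeff n = (F i).coeff n := by
    intro i n hn
    rw [expandAt_eq, hcoeff (Phi (z i)) (Phi_C (z i)) n, hCneg n hn, add_zero]
    have h2 : (∑ k ∈ Tinf, (Finf.coeff k) * ((Phi (z i)) (RatFunc.X ^ k.natAbs)).coeff n) = 0 := by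
      refine Finset.sum_eq_zero fun k _ => ?_
      rw [(Phi_X_pow_isReg (z i) k.natAbs).coeff_neg hn, mul_zero]
    rw [h2, add_zero]
    rw [Finset.sum_eq_single i]
    · have h3 : ∀ k ∈ T i, (F i).coeff k
          * ((Phi (z i)) (((RatFunc.X - RatFunc.C (z i))⁻¹) ^ k.natAbs)).coeff n
            = if n = k then (F i).coeff k else 0 := by
        intro k hk
        have hkneg : k < 0 := (Finset.mem_Ico.mp hk).2
        have hnat : (-(k.natAbs : ℤ)) = k := by omega
        rw [Phi_inv_atom_self, HahnSeries.coeff_single, hnat, mul_ite, mul_one, mul_zero]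
        simp
      rw [Finset.sum_congr rfl h3, Finset.sum_ite_eq]
      by_cases hmem : n ∈ T i
      · simp [hmem]
      · simp only [hmem, if_false]
        have hlt : n < (F i).order := by
          rw [hT] at hmem
          simp only [Finset.mem_Ico] at hmem
          omega
        exact (HahnSeries.coeff_eq_zero_of_lt_order hlt).symm
    · intro j _ hj
      refine Finset.sum_eq_zero fun k _ => ?_
      have hne : z j ≠ z i := fun h => hj (hz h)
      rw [(Phi_inv_atom_ne (z i) (z j) hne k.natAbs).coeff_neg hn, mul_zero]
    · intro h; exact absurd (Finset.mem_univ i) h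
  -- property 4
  have hD : ∀ n : ℤ, n < 0 →
      ((ratAtInf r : RatFunc ℂ) : LaurentSeries ℂ).coeff n = Finf.coeff n := by
    intro n hn
    rw [ratAtInf_coe, hcoeff Psi Psi_C n, hCneg n hn, add_zero]
    have h1 : (∑ i : Fin N, ∑ k ∈ T i,
        ((F i).coeff k) * (Psi (((RatFunc.X - RatFunc.C (z i))⁻¹) ^ k.natAbs)).coeff n) = 0 := by
      refine Finset.sum_eq_zero fun i _ => Finset.sum_eq_zero fun k _ => ?_
      rw [(Psi_inv_atom (z i) k.natAbs).coeff_neg hn, mul_zero]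
    rw [h1, zero_add]
    have h3 : ∀ k ∈ Tinf, (Finf.coeff k) * (Psi (RatFunc.X ^ k.natAbs)).coeff n
        = if n = k then Finf.coeff k else 0 := by
      intro k hk
      have hkneg : k < 0 := (Finset.mem_Ico.mp hk).2
      have hnat : (-(k.natAbs : ℤ)) = k := by omega
      rw [Psi_X_pow, HahnSeries.coeff_single, hnat, mul_ite, mul_one, mul_zero]
      simp
    rw [Finset.sum_congr rfl h3, Finset.sum_ite_eq]
    by_cases hmem : n ∈ Tinf
    · simp [hmem]
    · simp only [hmem, if_false]
      have hlt : n < Finf.order := by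
        rw [hTinf] at hmem
        simp only [Finset.mem_Ico] at hmem
        omega
      exact (HahnSeries.coeff_eq_zero_of_lt_order hlt).symm
  refine ⟨r, ⟨hA, hB, hC, hD⟩, ?_⟩
  rintro y ⟨hyd, hye, hyz, hyi⟩
  refine uniq z u hu y r hyd hA hye hB ?_ ?_
  · intro i n hn
    rw [← expandAt_eq, ← expandAt_eq]
    rw [hyz i n hn, hC i n hn]
  · intro n hn
    rw [← ratAtInf_coe, ← ratAtInf_coe]
    rw [hyi n hn, hD n hn]

end FFR
end

section
/- Let g be simple and χ ∈ g* regular. Then the restrictions of the polynomials P̄_{i,n}, for i = 1,…,ℓ and n < −1, to the affine subspace χ + t g*[[t]] ⊂ g*[[t]] are algebraically independent: the differentials of P̄_{i,n} at the point χ (constant series) are the linearly independent vectors (dP̄_i|_χ) ⊗ t^n ∈ g((t))/t^{-1}g[[t]]. -/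
open MvPolynomial Finset

namespace RIAIAux

variable {n ℓ : ℕ}

/-- Locality: the `m`-th coefficient of `aeval f P` only depends on coefficients `≤ m`
of the `f j`. -/
lemma coeff_aeval_congr {k : ℕ} (f g : Fin n → PowerSeries ℂ)
    (h : ∀ j, ∀ m ≤ k, PowerSeries.coeff m (f j) = PowerSeries.coeff m (g j))
    (P : MvPolynomial (Fin n) ℂ) :
    ∀ m ≤ k, PowerSeries.coeff m (MvPolynomial.aeval f P)
      = PowerSeries.coeff m (MvPolynomial.aeval g P) := by
  induction P using MvPolynomial.induction_on with
  | C a => intro m hm; simp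
  | add p q hp hq => intro m hm; simp [map_add, hp m hm, hq m hm]
  | mul_X p j hp =>
    intro m hm
    simp only [map_mul, MvPolynomial.aeval_X]
    rw [PowerSeries.coeff_mul, PowerSeries.coeff_mul]
    refine Finset.sum_congr rfl ?_
    rintro ⟨u, v⟩ huv
    rw [Finset.HasAntidiagonal.mem_antidiagonal] at huv
    have hu : u ≤ k := le_trans (by omega) hm
    have hv : v ≤ k := le_trans (by omega) hm
    rw [hp u hu, h j v hv]

lemma constantCoeff_aeval (f : Fin n → PowerSeries ℂ) (P : MvPolynomial (Fin n) ℂ) :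
    PowerSeries.constantCoeff (MvPolynomial.aeval f P)
      = MvPolynomial.eval (fun j => PowerSeries.constantCoeff (f j)) P := by
  induction P using MvPolynomial.induction_on with
  | C a => simp [PowerSeries.algebraMap_apply]
  | add p q hp hq => simp [hp, hq]
  | mul_X p j hp => simp only [map_mul, MvPolynomial.aeval_X, MvPolynomial.eval_mul,
      MvPolynomial.eval_X, hp]

lemma coeff_mul_eq_of_vanish {k : ℕ} {E f : PowerSeries ℂ}
    (hE : ∀ m < k, PowerSeries.coeff m E = 0) :
    PowerSeries.coeff k (E * f)
      = PowerSeries.coeff k E * PowerSeries.constantCoeff f := by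
  rw [PowerSeries.coeff_mul, Finset.sum_eq_single (k, 0)]
  · simp [PowerSeries.coeff_zero_eq_constantCoeff]
  · rintro ⟨u, v⟩ huv hne
    rw [Finset.HasAntidiagonal.mem_antidiagonal] at huv
    have hu : u < k := by
      by_contra hge
      push_neg at hge
      have hu' : u = k := by omega
      have hv' : v = 0 := by omega
      exact hne (by simp [hu', hv'])
    rw [hE u hu, zero_mul]
  · intro h
    exact absurd (Finset.HasAntidiagonal.mem_antidiagonal.mpr (by omega)) h

/-- First-order Taylor expansion: perturbing the argument by `c · X^k` changes the `k`-th
coefficient by the differential at `χ` applied to `c`. -/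
lemma coeff_aeval_perturb {k : ℕ} (hk : 1 ≤ k) (χ : Fin n → ℂ)
    (ψ : Fin n → PowerSeries ℂ) (c : Fin n → ℂ) (P : MvPolynomial (Fin n) ℂ) :
    PowerSeries.coeff k (MvPolynomial.aeval
        (fun j => (PowerSeries.C (χ j) + PowerSeries.X * ψ j)
          + PowerSeries.C (c j) * PowerSeries.X ^ k) P)
      = PowerSeries.coeff k (MvPolynomial.aeval
          (fun j => PowerSeries.C (χ j) + PowerSeries.X * ψ j) P)
        + ∑ j, MvPolynomial.eval χ (MvPolynomial.pderiv j P) * c j := by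
  set φ : Fin n → PowerSeries ℂ :=
    fun j => PowerSeries.C (χ j) + PowerSeries.X * ψ j with hφdef
  set φ' : Fin n → PowerSeries ℂ :=
    fun j => φ j + PowerSeries.C (c j) * PowerSeries.X ^ k with hφ'def
  have hagree : ∀ j, ∀ m ≤ k - 1,
      PowerSeries.coeff m (φ' j) = PowerSeries.coeff m (φ j) := by
    intro j m hm
    have hmk : m ≠ k := by omega
    simp only [hφ'def, map_add, PowerSeries.coeff_C_mul_X_pow, hmk, if_false, add_zero]
  have hconst : ∀ j, PowerSeries.constantCoeff (φ j) = χ j := by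
    intro j; simp [hφdef]
  induction P using MvPolynomial.induction_on with
  | C a => simp
  | add p q hp hq =>
    simp only [map_add, hp, hq]
    have hsplit : ∑ x : Fin n, (MvPolynomial.eval χ (MvPolynomial.pderiv x p)
          + MvPolynomial.eval χ (MvPolynomial.pderiv x q)) * c x
        = (∑ x : Fin n, MvPolynomial.eval χ (MvPolynomial.pderiv x p) * c x)
          + ∑ x : Fin n, MvPolynomial.eval χ (MvPolynomial.pderiv x q) * c x := by
      rw [← Finset.sum_add_distrib]
      exact Finset.sum_congr rfl fun x _ => add_mul _ _ _
    rw [hsplit]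
    ring
  | mul_X p i hp =>
    have A' := MvPolynomial.aeval φ' p
    set A := MvPolynomial.aeval φ p with hA
    set E : PowerSeries ℂ := MvPolynomial.aeval φ' p - A with hE
    set S : ℂ := ∑ j, MvPolynomial.eval χ (MvPolynomial.pderiv j p) * c j with hS
    have hEk : PowerSeries.coeff k E = S := by
      simp only [hE, map_sub]
      rw [hp]
      ring
    have hElow : ∀ m < k, PowerSeries.coeff m E = 0 := by
      intro m hm
      simp only [hE, map_sub]
      rw [coeff_aeval_congr φ' φ hagree p m (by omega)]
      ring
    have hexpand : MvPolynomial.aeval φ' (p * MvPolynomial.X i)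
        = A * φ i + PowerSeries.C (c i) * (A * PowerSeries.X ^ k)
          + E * φ i + PowerSeries.C (c i) * (E * PowerSeries.X ^ k) := by
      rw [map_mul, MvPolynomial.aeval_X]
      have h1 : MvPolynomial.aeval φ' p = A + E := by rw [hE]; ring
      have h2 : φ' i = φ i + PowerSeries.C (c i) * PowerSeries.X ^ k := rfl
      rw [h1, h2]; ring
    have hAD : PowerSeries.coeff k (PowerSeries.C (c i) * (A * PowerSeries.X ^ k))
        = c i * MvPolynomial.eval χ p := by
      rw [PowerSeries.coeff_C_mul]
      have : PowerSeries.coeff k (A * PowerSeries.X ^ k)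
          = PowerSeries.coeff 0 A := by
        have := PowerSeries.coeff_mul_X_pow A k 0
        simpa using this
      rw [this, PowerSeries.coeff_zero_eq_constantCoeff, hA, constantCoeff_aeval]
      simp only [hconst]
    have hEφ : PowerSeries.coeff k (E * φ i) = S * χ i := by
      rw [coeff_mul_eq_of_vanish hElow, hEk, hconst]
    have hED : PowerSeries.coeff k (PowerSeries.C (c i) * (E * PowerSeries.X ^ k))
        = 0 := by
      rw [PowerSeries.coeff_C_mul]
      have : PowerSeries.coeff k (E * PowerSeries.X ^ k)
          = PowerSeries.coeff 0 E := by
        have := PowerSeries.coeff_mul_X_pow E k 0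
        simpa using this
      rw [this, hElow 0 (by omega), mul_zero]
    have hpderiv : ∀ j : Fin n,
        MvPolynomial.eval χ (MvPolynomial.pderiv j (p * MvPolynomial.X i))
          = MvPolynomial.eval χ (MvPolynomial.pderiv j p) * χ i
            + MvPolynomial.eval χ p * (if j = i then 1 else 0) := by
      intro j
      rw [MvPolynomial.pderiv_mul, MvPolynomial.pderiv_X]
      by_cases h : j = i
      · subst h; simp [Pi.single_eq_same]
      · simp [h, Pi.single_eq_of_ne h]
    have hsum : ∑ j, MvPolynomial.eval χ (MvPolynomial.pderiv j (p * MvPolynomial.X i)) * c j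
        = S * χ i + MvPolynomial.eval χ p * c i := by
      simp only [hpderiv]
      rw [Finset.sum_congr rfl (fun j _ => by ring :
        ∀ j ∈ Finset.univ, (MvPolynomial.eval χ (MvPolynomial.pderiv j p) * χ i
            + MvPolynomial.eval χ p * (if j = i then 1 else 0)) * c j
          = MvPolynomial.eval χ (MvPolynomial.pderiv j p) * c j * χ i
            + MvPolynomial.eval χ p * ((if j = i then 1 else 0) * c j))]
      rw [Finset.sum_add_distrib, ← Finset.sum_mul, ← Finset.mul_sum]
      have : ∑ j, (if j = i then (1:ℂ) else 0) * c j = c i := by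
        rw [Finset.sum_congr rfl (fun j _ => by split <;> simp_all :
          ∀ j ∈ Finset.univ, (if j = i then (1:ℂ) else 0) * c j
            = if j = i then c j else 0)]
        simp
      rw [this, hS]
    rw [hexpand]
    simp only [map_add, hAD, hEφ, hED, hsum, map_mul, MvPolynomial.aeval_X]
    ring

/-- Solvability of the linear system coming from linearly independent rows. -/
lemma exists_sol (c : Fin ℓ → Fin n → ℂ) (hc : LinearIndependent ℂ c) (w : Fin ℓ → ℂ) :
    ∃ a : Fin n → ℂ, ∀ i, ∑ j, c i j * a j = w i := by
  let M : Matrix (Fin ℓ) (Fin n) ℂ := Matrix.of c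
  have hM : LinearIndependent ℂ M := hc
  have hrank : M.rank = ℓ := by simpa using hM.rank_matrix
  have hsurj : Function.Surjective M.mulVecLin := by
    rw [← LinearMap.range_eq_top]
    apply Submodule.eq_top_of_finrank_eq
    unfold Matrix.rank at hrank
    rw [hrank]
    simp [Module.finrank_pi]
  obtain ⟨a, ha⟩ := hsurj w
  refine ⟨a, fun i => ?_⟩
  have := congrFun ha i
  simpa [Matrix.mulVecLin_apply, Matrix.mulVec, dotProduct, M] using this


section Construction

variable {n ℓ : ℕ} (P : Fin ℓ → MvPolynomial (Fin n) ℂ) (χ : Fin n → ℂ)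
  (sol : (Fin ℓ → ℂ) → (Fin n → ℂ)) (v : Fin ℓ × {k : ℕ // 1 ≤ k} → ℂ)

/-- The correction needed at step `m`. -/
noncomputable def targetFun (m : ℕ) (B : Fin n → PowerSeries ℂ) : Fin ℓ → ℂ :=
  fun i => v (i, ⟨m + 1, Nat.le_add_left 1 m⟩)
    - PowerSeries.coeff (m + 1)
        (MvPolynomial.aeval
          (fun j => PowerSeries.C (χ j) + PowerSeries.X * B j) (P i))

/-- Recursive construction of the truncations of `ψ`. -/
noncomputable def Bseq : ℕ → Fin n → PowerSeries ℂ
  | 0 => fun _ => 0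
  | m + 1 => fun j => Bseq m j
      + PowerSeries.C (sol (targetFun P χ v m (Bseq m)) j) * PowerSeries.X ^ m

lemma Bseq_succ (m : ℕ) : Bseq P χ sol v (m + 1)
    = fun j => Bseq P χ sol v m j
        + PowerSeries.C (sol (targetFun P χ v m (Bseq P χ sol v m)) j)
          * PowerSeries.X ^ m := rfl

lemma Bseq_stab {m m' : ℕ} (hmm' : m ≤ m') {p : ℕ} (hp : p < m) (j : Fin n) :
    PowerSeries.coeff p (Bseq P χ sol v m' j)
      = PowerSeries.coeff p (Bseq P χ sol v m j) := by
  induction m', hmm' using Nat.le_induction with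
  | base => rfl
  | succ m' hmm' ih =>
    rw [Bseq_succ]
    have hpm' : p ≠ m' := by omega
    simp only [map_add, PowerSeries.coeff_C_mul_X_pow, hpm', if_false, add_zero]
    exact ih

lemma Bseq_val
    (hsol : ∀ w i, ∑ j, MvPolynomial.eval χ (MvPolynomial.pderiv j (P i)) * sol w j = w i)
    (m : ℕ) (i : Fin ℓ) :
    PowerSeries.coeff (m + 1)
      (MvPolynomial.aeval
        (fun j => PowerSeries.C (χ j) + PowerSeries.X * Bseq P χ sol v (m + 1) j) (P i))
      = v (i, ⟨m + 1, Nat.le_add_left 1 m⟩) := by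
  have harg : (fun j => PowerSeries.C (χ j) + PowerSeries.X * Bseq P χ sol v (m + 1) j)
      = fun j => (PowerSeries.C (χ j) + PowerSeries.X * Bseq P χ sol v m j)
          + PowerSeries.C (sol (targetFun P χ v m (Bseq P χ sol v m)) j)
            * PowerSeries.X ^ (m + 1) := by
    funext j
    rw [Bseq_succ]
    ring
  rw [harg, coeff_aeval_perturb (Nat.le_add_left 1 m) χ _ _ (P i),
    hsol (targetFun P χ v m (Bseq P χ sol v m)) i]
  simp only [targetFun]
  ring

/-- The series `ψ` built from the truncations. -/
noncomputable def psiFun : Fin n → PowerSeries ℂ :=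
  fun j => PowerSeries.mk fun p => PowerSeries.coeff p (Bseq P χ sol v (p + 1) j)

lemma psiFun_spec
    (hsol : ∀ w i, ∑ j, MvPolynomial.eval χ (MvPolynomial.pderiv j (P i)) * sol w j = w i)
    (q : Fin ℓ × {k : ℕ // 1 ≤ k}) :
    PowerSeries.coeff (q.2 : ℕ)
      (MvPolynomial.aeval
        (fun j => PowerSeries.C (χ j) + PowerSeries.X * psiFun P χ sol v j) (P q.1))
      = v q := by
  obtain ⟨i, k, hk⟩ := q
  obtain ⟨m, rfl⟩ : ∃ m, k = m + 1 := ⟨k - 1, by omega⟩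
  have hagree : ∀ j, ∀ p ≤ m + 1,
      PowerSeries.coeff p (PowerSeries.C (χ j) + PowerSeries.X * psiFun P χ sol v j)
        = PowerSeries.coeff p
            (PowerSeries.C (χ j) + PowerSeries.X * Bseq P χ sol v (m + 1) j) := by
    intro j p hp
    simp only [map_add]
    congr 1
    cases p with
    | zero => simp
    | succ p =>
      rw [PowerSeries.coeff_succ_X_mul, PowerSeries.coeff_succ_X_mul, psiFun,
        PowerSeries.coeff_mk]
      exact (Bseq_stab P χ sol v (by omega : p + 1 ≤ m + 1) (by omega : p < p + 1) j).symm
  have h := coeff_aeval_congr _ _ hagree (P i) (m + 1) le_rfl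
  exact h.trans (Bseq_val P χ sol v hsol m i)

end Construction

end RIAIAux

open RIAIAux

/-- for regular `χ ∈ g*` the restrictions of the polynomials
`P̄_{i,n}` (`i = 1,…,ℓ`, `n < -1`) to the affine subspace `χ + t g*[[t]]` are
algebraically independent.  We model `g*` as `Fin n → ℂ`; the series
`P̄_i(J̄(z))` evaluated on `φ(t) = χ + t ψ(t) ∈ χ + t g*[[t]]` is
`P̄_i(φ_1(z),…,φ_n(z)) ∈ ℂ[[z]]`, and `P̄_{i,m}` for `m < -1` corresponds to its
coefficient of `z^k`, `k = -m-1 ≥ 1`.  The key input (Kostant) is that for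
regular `χ` the differentials `dP̄_i|_χ` are linearly independent; the
differentials of the restricted functions at `χ` are then the linearly
independent vectors `(dP̄_i|_χ) ⊗ t^m`, whence algebraic independence in the
algebra of functions of `ψ`. -/
theorem restricted_invariants_algebraically_independent
    {n ℓ : ℕ}
    (P : Fin ℓ → MvPolynomial (Fin n) ℂ)
    (χ : Fin n → ℂ)
    (hKostant : LinearIndependent ℂ
      (fun i : Fin ℓ => fun j : Fin n => eval χ (pderiv j (P i)))) :
    AlgebraicIndependent ℂ
      (fun q : Fin ℓ × {k : ℕ // 1 ≤ k} =>
        (fun ψ : Fin n → PowerSeries ℂ =>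
          PowerSeries.coeff (q.2 : ℕ)
            (MvPolynomial.aeval
              (fun j : Fin n =>
                PowerSeries.C (χ j) + PowerSeries.X * ψ j) (P q.1))) :
        Fin ℓ × {k : ℕ // 1 ≤ k} → ((Fin n → PowerSeries ℂ) → ℂ)) := by
  classical
  obtain ⟨sol, hsol⟩ : ∃ sol : (Fin ℓ → ℂ) → (Fin n → ℂ),
      ∀ w i, ∑ j, eval χ (pderiv j (P i)) * sol w j = w i := by
    choose sol hsol using fun w =>
      exists_sol (fun i j => eval χ (pderiv j (P i))) hKostant w
    exact ⟨sol, hsol⟩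
  rw [algebraicIndependent_iff]
  intro Q hQ
  apply MvPolynomial.funext
  intro v
  have hψ : ∀ q : Fin ℓ × {k : ℕ // 1 ≤ k},
      PowerSeries.coeff (q.2 : ℕ)
        (MvPolynomial.aeval
          (fun j => PowerSeries.C (χ j) + PowerSeries.X * psiFun P χ sol v j) (P q.1))
      = v q := psiFun_spec P χ sol v hsol
  have h1 : (MvPolynomial.aeval
      (fun q : Fin ℓ × {k : ℕ // 1 ≤ k} =>
        (fun ψ : Fin n → PowerSeries ℂ =>
          PowerSeries.coeff (q.2 : ℕ)
            (MvPolynomial.aeval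
              (fun j : Fin n =>
                PowerSeries.C (χ j) + PowerSeries.X * ψ j) (P q.1)))) Q)
        (psiFun P χ sol v) = 0 := by rw [hQ]; rfl
  have h2 := MvPolynomial.comp_aeval_apply
    (Pi.evalAlgHom ℂ (fun _ : (Fin n → PowerSeries ℂ) => ℂ) (psiFun P χ sol v)) Q
    (f := fun q : Fin ℓ × {k : ℕ // 1 ≤ k} =>
      (fun ψ : Fin n → PowerSeries ℂ =>
        PowerSeries.coeff (q.2 : ℕ)
          (MvPolynomial.aeval
            (fun j : Fin n =>
              PowerSeries.C (χ j) + PowerSeries.X * ψ j) (P q.1))))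
  simp only [Pi.evalAlgHom_apply] at h2
  rw [h2] at h1
  have h3 : (fun q : Fin ℓ × {k : ℕ // 1 ≤ k} =>
      PowerSeries.coeff (q.2 : ℕ)
        (MvPolynomial.aeval
          (fun j : Fin n =>
            PowerSeries.C (χ j) + PowerSeries.X * psiFun P χ sol v j) (P q.1))) = v :=
    funext hψ
  rw [h3] at h1
  rw [map_zero, ← MvPolynomial.coe_aeval_eq_eval]
  exact h1
end
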